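/- In model D, the discrete recursive equilibrium equations 0 = Σ_{j=1}^{i−1} f_j f_{i−j} − (2m₀+1) f_i + 2 b_i (for all i ≥ 1), together with b_i = Σ_{j=i}^∞ f_j/(j+1), imply that f_i is uniquely determined for each i by the recursion f_i = (1+2m₀)^{−1} ( 2 b_i + Σ_{j=1}^{i−1} f_j f_{i−j} ) and b_{i+1} = b_i − f_i/(i+1), where b₁ = (m₀ − m₀²)/2. -/

import Mathlib

set_option maxHeartbeats 1000000 in
open Finset in
/-- Key helper: from the equilibrium hypotheses derive the `b 1` formula and the recursion. -/
lemma modelD_key (m₀ : ℝ) (hm₀ : m₀ ∈ Set.Ioo (0:ℝ) 1)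
    (f b : ℕ → ℝ)
    (hf0 : f 0 = 0) (hfpos : ∀ i, 0 ≤ f i) (hsum : Summable f)
    (hm : m₀ = ∑' i : ℕ, f i)
    (hb : ∀ i, b i = ∑' j : ℕ, if i ≤ j then f j / ((j : ℝ) + 1) else 0)
    (hequi : ∀ i, 1 ≤ i →
      0 = (∑ j ∈ Finset.Ico 1 i, f j * f (i - j)) - (2 * m₀ + 1) * f i + 2 * b i) :
    (b 1 = (m₀ - m₀ ^ 2) / 2) ∧
    (∀ i, 1 ≤ i →
      f i = (1 + 2 * m₀)⁻¹ * (2 * b i + ∑ j ∈ Finset.Ico 1 i, f j * f (i - j)) ∧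
      b (i + 1) = b i - f i / ((i : ℝ) + 1)) := by
  have hterm_nonneg : ∀ j : ℕ, 0 ≤ f j / ((j : ℝ) + 1) := fun j =>
    div_nonneg (hfpos j) (by positivity)
  have hterm_le : ∀ j : ℕ, f j / ((j : ℝ) + 1) ≤ f j := fun j => by
    rw [div_le_iff₀ (by positivity)]
    nlinarith [hfpos j, (Nat.cast_nonneg j : (0:ℝ) ≤ j)]
  have hterm : Summable (fun j : ℕ => f j / ((j : ℝ) + 1)) :=
    hsum.of_nonneg_of_le hterm_nonneg hterm_le
  have hite_nonneg : ∀ (i j : ℕ), 0 ≤ (if i ≤ j then f j / ((j : ℝ) + 1) else 0) := by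
    intro i j; split <;> [exact hterm_nonneg j; exact le_rfl]
  have hite_summable : ∀ i : ℕ, Summable (fun j : ℕ => if i ≤ j then f j / ((j : ℝ) + 1) else 0) := by
    intro i
    refine hterm.of_nonneg_of_le (hite_nonneg i) ?_
    intro j; split; · exact le_rfl
    · exact hterm_nonneg j
  -- b recursion
  have hbrec : ∀ i : ℕ, b i = b (i + 1) + f i / ((i : ℝ) + 1) := by
    intro i
    have hpt : ∀ j : ℕ, (if i ≤ j then f j / ((j : ℝ) + 1) else 0) =
        (if i + 1 ≤ j then f j / ((j : ℝ) + 1) else 0) +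
        (if j = i then f i / ((i : ℝ) + 1) else 0) := by
      intro j
      rcases lt_trichotomy j i with h | h | h
      · rw [if_neg (by omega), if_neg (by omega), if_neg (by omega)]; ring
      · subst h; rw [if_pos le_rfl, if_neg (by omega), if_pos rfl]; ring
      · rw [if_pos (by omega), if_pos (by omega), if_neg (by omega)]; ring
    have hsingle : Summable (fun j : ℕ => if j = i then f i / ((i : ℝ) + 1) else 0) :=
      summable_of_ne_finset_zero (s := {i}) (by intro j hj; rw [if_neg (by simpa using hj)])
    calc b i = ∑' j : ℕ, ((if i + 1 ≤ j then f j / ((j : ℝ) + 1) else 0) +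
        (if j = i then f i / ((i : ℝ) + 1) else 0)) := by
          rw [hb i]; exact tsum_congr hpt
      _ = b (i + 1) + f i / ((i : ℝ) + 1) := by
          rw [Summable.tsum_add (hite_summable (i + 1)) hsingle, tsum_ite_eq, hb (i + 1)]
  have hm₀pos : 0 < m₀ := hm₀.1
  -- recursion for f
  have hfrec : ∀ i, 1 ≤ i →
      f i = (1 + 2 * m₀)⁻¹ * (2 * b i + ∑ j ∈ Finset.Ico 1 i, f j * f (i - j)) := by
    intro i hi
    have h := hequi i hi
    have h1 : (0:ℝ) < 1 + 2 * m₀ := by linarith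
    field_simp
    linarith [h]
  -- Cauchy product
  have hnormf : Summable (fun x : ℕ => ‖f x‖) := by
    have : (fun x : ℕ => ‖f x‖) = f := funext fun x => Real.norm_of_nonneg (hfpos x)
    rw [this]; exact hsum
  have hconv_summable : Summable (fun n : ℕ => ∑ k ∈ range (n + 1), f k * f (n - k)) :=
    summable_norm_sum_mul_range_of_summable_norm hnormf hnormf |>.of_norm
  have hconv_tsum : (∑' n : ℕ, ∑ k ∈ range (n + 1), f k * f (n - k)) = m₀ ^ 2 := by
    rw [← tsum_mul_tsum_eq_tsum_sum_range_of_summable_norm hnormf hnormf, ← hm]; ring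
  have hconv_eq : ∀ i : ℕ, (∑ j ∈ Finset.Ico 1 i, f j * f (i - j)) =
      ∑ k ∈ range (i + 1), f k * f (i - k) := by
    intro i
    rcases Nat.eq_zero_or_pos i with h | h
    · subst h; simp [hf0]
    · rw [Finset.sum_range_succ, Nat.sub_self, hf0, mul_zero, add_zero,
        Finset.range_eq_Ico, Finset.sum_eq_sum_Ico_succ_bot h, hf0, zero_mul, zero_add]
  -- the double sum for b
  set H : ℕ × ℕ → ℝ := fun p => if p.2 + 1 ≤ p.1 then f p.1 / ((p.1 : ℝ) + 1) else 0 with hH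
  have hHnonneg : 0 ≤ H := by
    intro p; simp only [hH]; split <;> [exact hterm_nonneg p.1; exact le_rfl]
  have hHrow : ∀ j : ℕ, (∑' i : ℕ, H (j, i)) = (j : ℝ) * (f j / ((j : ℝ) + 1)) := by
    intro j
    rw [tsum_eq_sum (s := range j) (by
      intro i hi; simp only [hH]; rw [if_neg]; simp only [Finset.mem_range, not_lt] at hi; omega)]
    simp only [hH]
    rw [Finset.sum_congr rfl (fun i hi => by
      rw [if_pos]; simp only [Finset.mem_range] at hi; omega)]
    rw [Finset.sum_const, Finset.card_range, nsmul_eq_mul]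
  have hHrow_summable : ∀ j : ℕ, Summable (fun i : ℕ => H (j, i)) := by
    intro j
    refine summable_of_ne_finset_zero (s := range j) ?_
    intro i hi; simp only [hH]; rw [if_neg]; simp only [Finset.mem_range, not_lt] at hi; omega
  have hcol_summable : Summable (fun j : ℕ => (j : ℝ) * (f j / ((j : ℝ) + 1))) := by
    refine hsum.of_nonneg_of_le (fun j => mul_nonneg (Nat.cast_nonneg j) (hterm_nonneg j)) ?_
    intro j
    rw [mul_div_assoc', div_le_iff₀ (by positivity)]
    nlinarith [hfpos j, (Nat.cast_nonneg j : (0:ℝ) ≤ j)]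
  have hHsummable : Summable H := by
    rw [summable_prod_of_nonneg hHnonneg]
    exact ⟨hHrow_summable, hcol_summable.congr fun j => (hHrow j).symm⟩
  have hbshift : ∀ i : ℕ, b (i + 1) = ∑' j : ℕ, H (j, i) := by
    intro i; rw [hb (i + 1)]
  have hbsummable : Summable (fun i : ℕ => b (i + 1)) := by
    have hswap : Summable (H ∘ Prod.swap) := (Equiv.prodComm ℕ ℕ).summable_iff.mpr hHsummable
    have := ((summable_prod_of_nonneg (f := H ∘ Prod.swap)
      (fun p => hHnonneg (p.2, p.1))).mp hswap).2
    simp only [Function.comp, Prod.swap] at this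
    refine this.congr fun i => ?_
    rw [hbshift i]
  have hcomm : (∑' i : ℕ, ∑' j : ℕ, H (j, i)) = ∑' j : ℕ, ∑' i : ℕ, H (j, i) :=
    Summable.tsum_comm (f := fun j i => H (j, i)) (by exact hHsummable)
  have hb1 : (∑' j : ℕ, f j / ((j : ℝ) + 1)) = b 1 := by
    rw [hb 1]
    refine tsum_congr fun j => ?_
    rcases Nat.eq_zero_or_pos j with h | h
    · subst h; simp [hf0]
    · rw [if_pos (by omega : 1 ≤ j)]
  have hbsum : (∑' i : ℕ, b (i + 1)) = m₀ - b 1 := by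
    calc (∑' i : ℕ, b (i + 1)) = ∑' i : ℕ, ∑' j : ℕ, H (j, i) := tsum_congr hbshift
      _ = ∑' j : ℕ, ∑' i : ℕ, H (j, i) := hcomm
      _ = ∑' j : ℕ, (j : ℝ) * (f j / ((j : ℝ) + 1)) := tsum_congr hHrow
      _ = ∑' j : ℕ, (f j - f j / ((j : ℝ) + 1)) := by
          refine tsum_congr fun j => ?_
          have : ((j : ℝ) + 1) ≠ 0 := by positivity
          field_simp
          ring
      _ = (∑' j : ℕ, f j) - ∑' j : ℕ, f j / ((j : ℝ) + 1) := Summable.tsum_sub hsum hterm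
      _ = m₀ - b 1 := by rw [← hm, hb1]
  -- shift sums
  have hfshift : (∑' i : ℕ, f (i + 1)) = m₀ := by
    have := Summable.tsum_eq_zero_add hsum
    rw [hf0, zero_add] at this
    rw [← this, ← hm]
  have hfshift_summable : Summable (fun i : ℕ => f (i + 1)) := (summable_nat_add_iff 1).mpr hsum
  have hconvshift_summable : Summable (fun i : ℕ => ∑ k ∈ range (i + 1 + 1), f k * f (i + 1 - k)) :=
    (summable_nat_add_iff (f := fun n : ℕ => ∑ k ∈ range (n + 1), f k * f (n - k)) 1).mpr
      hconv_summable
  have hconvshift : (∑' i : ℕ, ∑ k ∈ range (i + 1 + 1), f k * f (i + 1 - k)) = m₀ ^ 2 := by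
    have h0 : (∑ k ∈ range (0 + 1), f k * f (0 - k)) = 0 := by simp [hf0]
    have := Summable.tsum_eq_zero_add hconv_summable
    rw [h0, zero_add] at this
    rw [← this, hconv_tsum]
  -- sum the equilibrium equations
  have hb1val : b 1 = (m₀ - m₀ ^ 2) / 2 := by
    have hzero : (∑' i : ℕ, ((∑ k ∈ range (i + 1 + 1), f k * f (i + 1 - k))
        - (2 * m₀ + 1) * f (i + 1) + 2 * b (i + 1))) = 0 := by
      rw [tsum_congr (fun i => ?_), tsum_zero]
      rw [← hconv_eq (i + 1)]
      exact (hequi (i + 1) (by omega)).symm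
    have hsplit : (∑' i : ℕ, ((∑ k ∈ range (i + 1 + 1), f k * f (i + 1 - k))
        - (2 * m₀ + 1) * f (i + 1) + 2 * b (i + 1))) =
        m₀ ^ 2 - (2 * m₀ + 1) * m₀ + 2 * (m₀ - b 1) := by
      rw [Summable.tsum_add (Summable.sub hconvshift_summable (hfshift_summable.mul_left _))
          (hbsummable.mul_left _),
        Summable.tsum_sub hconvshift_summable (hfshift_summable.mul_left _),
        tsum_mul_left, tsum_mul_left, hconvshift, hfshift, hbsum]
    rw [hsplit] at hzero
    linarith
  exact ⟨hb1val, fun i hi => ⟨hfrec i hi, by linarith [hbrec i]⟩⟩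

/-- The model D equilibrium equations determine the equilibrium sequence uniquely
via the recursion `f_i = (1+2m₀)⁻¹ (2 b_i + Σ_{j<i} f_j f_{i-j})`,
`b_{i+1} = b_i - f_i/(i+1)`, with `b₁ = (m₀ - m₀²)/2`. -/
theorem stmt_18 (m₀ : ℝ) (hm₀ : m₀ ∈ Set.Ioo (0:ℝ) 1)
    (f b : ℕ → ℝ)
    (hf0 : f 0 = 0) (hfpos : ∀ i, 0 ≤ f i) (hsum : Summable f)
    (hm : m₀ = ∑' i : ℕ, f i)
    (hb : ∀ i, b i = ∑' j : ℕ, if i ≤ j then f j / ((j : ℝ) + 1) else 0)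
    (hequi : ∀ i, 1 ≤ i →
      0 = (∑ j ∈ Finset.Ico 1 i, f j * f (i - j)) - (2 * m₀ + 1) * f i + 2 * b i) :
    (b 1 = (m₀ - m₀ ^ 2) / 2) ∧
    (∀ i, 1 ≤ i →
      f i = (1 + 2 * m₀)⁻¹ * (2 * b i + ∑ j ∈ Finset.Ico 1 i, f j * f (i - j)) ∧
      b (i + 1) = b i - f i / ((i : ℝ) + 1)) ∧
    (∀ g bg : ℕ → ℝ,
      g 0 = 0 → (∀ i, 0 ≤ g i) → Summable g → m₀ = (∑' i : ℕ, g i) →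
      (∀ i, bg i = ∑' j : ℕ, if i ≤ j then g j / ((j : ℝ) + 1) else 0) →
      (∀ i, 1 ≤ i →
        0 = (∑ j ∈ Finset.Ico 1 i, g j * g (i - j)) - (2 * m₀ + 1) * g i + 2 * bg i) →
      ∀ i, g i = f i) := by
  obtain ⟨hb1f, hrecf⟩ := modelD_key m₀ hm₀ f b hf0 hfpos hsum hm hb hequi
  refine ⟨hb1f, hrecf, ?_⟩
  intro g bg hg0 hgpos hgsum hgm hgb hgequi
  obtain ⟨hb1g, hrecg⟩ := modelD_key m₀ hm₀ g bg hg0 hgpos hgsum hgm hgb hgequi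
  have main : ∀ i : ℕ, (1 ≤ i → bg i = b i) ∧ g i = f i := by
    intro i
    induction i using Nat.strong_induction_on with
    | _ i IH =>
      have hbgi : 1 ≤ i → bg i = b i := by
        intro hi
        match i, hi with
        | 1, _ => rw [hb1g, hb1f]
        | (k + 2), _ =>
          have IHk := IH (k + 1) (by omega)
          have h1 := (hrecf (k + 1) (by omega)).2
          have h2 := (hrecg (k + 1) (by omega)).2
          rw [h2, h1, IHk.1 (by omega), IHk.2]
      refine ⟨hbgi, ?_⟩
      by_cases hi : 1 ≤ i
      · rw [(hrecg i hi).1, (hrecf i hi).1, hbgi hi]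
        congr 1
        congr 1
        refine Finset.sum_congr rfl fun j hj => ?_
        simp only [Finset.mem_Ico] at hj
        rw [(IH j (by omega)).2, (IH (i - j) (by omega)).2]
      · have : i = 0 := by omega
        rw [this, hg0, hf0]
  exact fun i => (main i).2
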